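/- arXiv:0705.2088 — 4 statements merged into one kernel-verified Lean document; each statement's English description precedes it below -/
import Mathlib

section
/- Let a_1, …, a_n ∈ ℤ^n be linearly independent, and let C = {ρ_1 a_1 + ⋯ + ρ_n a_n : 0 ≤ ρ_i < 1} be the half-open parallelepiped spanned by them. Then the number of integer points in C equals |det(a_1, …, a_n)|. -/
lemma aux_index_eq_natAbs_det (n : ℕ) (a : Fin n → Fin n → ℤ)
    (hli : LinearIndependent ℤ a) :
    (Submodule.span ℤ (Set.range a)).toAddSubgroup.index =
      ((Matrix.of fun i j => a j i).det).natAbs := by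
  classical
  set N : Submodule ℤ (Fin n → ℤ) := Submodule.span ℤ (Set.range a) with hN
  let bN : Module.Basis (Fin n) ℤ N := Module.Basis.span hli
  have hne : N.toAddSubgroup.index ≠ 0 :=
    Int.submodule_toAddSubgroup_index_ne_zero_iff.mpr ⟨bN.equivFun⟩
  obtain ⟨m, snf⟩ := N.smithNormalForm (Pi.basisFun ℤ (Fin n))
  have hm' : n = m := by simpa using ((snf.toAddSubgroup_index_ne_zero_iff).mp hne).symm
  subst hm'
  -- index in terms of snf coefficients
  have hindex : N.toAddSubgroup.index = (∏ i, snf.a i).natAbs := by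
    rw [snf.toAddSubgroup_index_eq_ite, if_pos (by simp)]
    simp only [Ideal.span_singleton_toAddSubgroup_eq_zmultiples, Int.index_zmultiples]
    exact (map_prod Int.natAbsHom snf.a Finset.univ).symm
  -- the bijection from snf.f
  have hbij : Function.Bijective snf.f :=
    (Fintype.bijective_iff_injective_and_card snf.f).mpr ⟨snf.f.injective, by simp⟩
  let g : Fin n ≃ Fin n := Equiv.ofBijective snf.f hbij
  -- the linear map from the snf basis
  let E : (Fin n → ℤ) ≃ₗ[ℤ] N := snf.bM.equiv snf.bN g.symm
  let F : (Fin n → ℤ) →ₗ[ℤ] (Fin n → ℤ) := (N.subtype).comp (E : (Fin n → ℤ) →ₗ[ℤ] N)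
  have hF : ∀ i, F (snf.bM i) = snf.a (g.symm i) • snf.bM i := by
    intro i
    have h1 : F (snf.bM i) = (snf.bN (g.symm i) : Fin n → ℤ) := by
      simp [F, E, Module.Basis.equiv_apply]
    rw [h1, snf.snf]
    congr 2
    exact g.apply_symm_apply i
  have hdetF : (LinearMap.det F).natAbs = (∏ i, snf.a i).natAbs := by
    rw [← LinearMap.det_toMatrix snf.bM]
    have h2 : LinearMap.toMatrix snf.bM snf.bM F
        = Matrix.diagonal (fun i => snf.a (g.symm i)) := by
      ext i j
      rw [LinearMap.toMatrix_apply, hF, map_smul, Module.Basis.repr_self]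
      by_cases h : i = j
      · subst h; simp
      · simp [Matrix.diagonal_apply_ne _ h, Finsupp.single_eq_of_ne h]
    rw [h2, Matrix.det_diagonal, ← Equiv.prod_comp g.symm snf.a]
  -- the linear map from our basis
  let E' : (Fin n → ℤ) ≃ₗ[ℤ] N := (Pi.basisFun ℤ (Fin n)).equiv bN (Equiv.refl _)
  let F' : (Fin n → ℤ) →ₗ[ℤ] (Fin n → ℤ) := (N.subtype).comp (E' : (Fin n → ℤ) →ₗ[ℤ] N)
  have hassoc : (LinearMap.det F').natAbs = (LinearMap.det F).natAbs :=
    Int.natAbs_eq_iff_associated.mpr (LinearMap.associated_det_comp_equiv _ _ _)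
  have hdetF' : LinearMap.det F' = (Matrix.of fun i j => a j i).det := by
    rw [← LinearMap.det_toMatrix (Pi.basisFun ℤ (Fin n))]
    congr 1
    ext i j
    rw [LinearMap.toMatrix_apply]
    have h3 : F' ((Pi.basisFun ℤ (Fin n)) j) = (bN j : Fin n → ℤ) := by
      have h4 := Module.Basis.equiv_apply (Pi.basisFun ℤ (Fin n)) j bN (Equiv.refl _)
      simp only [Equiv.refl_apply] at h4
      simp only [F', E', LinearMap.coe_comp, LinearEquiv.coe_coe, Function.comp_apply, h4]
      rfl
    rw [h3]
    show (bN j : Fin n → ℤ) i = a j i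
    exact congrArg (fun v : N => (v : Fin n → ℤ) i) (Module.Basis.span_apply hli j)
  rw [hindex, ← hdetF, ← hassoc, hdetF']

/-- The number of integer points in the half-open parallelepiped spanned by
linearly independent integer vectors `a 1, …, a n` equals the absolute value of
the determinant of the matrix with these columns. -/
theorem lattice_points_in_halfopen_parallelepiped (n : ℕ) (a : Fin n → Fin n → ℤ)
    (ha : LinearIndependent ℝ (fun j => (WithLp.toLp 2 (fun i => (a j i : ℝ)) : EuclideanSpace ℝ (Fin n)))) :
    ({x : EuclideanSpace ℝ (Fin n) |
        ∃ ρ : Fin n → ℝ, (∀ i, 0 ≤ ρ i ∧ ρ i < 1) ∧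
          x = ∑ j, ρ j • (WithLp.toLp 2 (fun i => (a j i : ℝ)) : EuclideanSpace ℝ (Fin n))} ∩
      {x | ∀ i, ∃ z : ℤ, x i = (z : ℝ)}).ncard =
      ((Matrix.of fun i j => a j i).det).natAbs := by
  classical
  rcases Nat.eq_zero_or_pos n with hn | hn
  · subst hn
    haveI : Unique (EuclideanSpace ℝ (Fin 0)) :=
      ⟨⟨0⟩, fun x => PiLp.ext fun i => i.elim0⟩
    have h1 : ({x : EuclideanSpace ℝ (Fin 0) |
        ∃ ρ : Fin 0 → ℝ, (∀ i, 0 ≤ ρ i ∧ ρ i < 1) ∧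
          x = ∑ j, ρ j • (WithLp.toLp 2 (fun i => (a j i : ℝ)) : EuclideanSpace ℝ (Fin 0))} ∩
      {x | ∀ i, ∃ z : ℤ, x i = (z : ℝ)}) = Set.univ :=
      Set.eq_univ_iff_forall.mpr fun x =>
        ⟨⟨fun _ => 0, fun i => i.elim0, Subsingleton.elim _ _⟩, fun i => i.elim0⟩
    rw [h1, Set.ncard_univ, Matrix.det_fin_zero]
    simp [Nat.card_unique]
  haveI : Nonempty (Fin n) := ⟨⟨0, hn⟩⟩
  set aR : Fin n → EuclideanSpace ℝ (Fin n) :=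
    fun j => (WithLp.toLp 2 (fun i => (a j i : ℝ)) : EuclideanSpace ℝ (Fin n)) with haR
  have hcard : Fintype.card (Fin n) = Module.finrank ℝ (EuclideanSpace ℝ (Fin n)) := by
    simp [finrank_euclideanSpace]
  let bR : Module.Basis (Fin n) ℝ (EuclideanSpace ℝ (Fin n)) :=
    basisOfLinearIndependentOfCardEqFinrank ha hcard
  have hbR : ⇑bR = aR := coe_basisOfLinearIndependentOfCardEqFinrank ha hcard
  -- the integer cast map
  let castA : (Fin n → ℤ) →+ EuclideanSpace ℝ (Fin n) :=
    { toFun := fun y => (WithLp.toLp 2 (fun i => (y i : ℝ)) : EuclideanSpace ℝ (Fin n))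
      map_zero' := by ext i; simp
      map_add' := fun x y => by ext i; simp }
  let castₗ : (Fin n → ℤ) →ₗ[ℤ] EuclideanSpace ℝ (Fin n) := castA.toIntLinearMap
  have hcast_inj : Function.Injective castₗ := fun x y h =>
    funext fun i => Int.cast_injective (congrArg (fun v => v i) h)
  -- ℤ-linear independence of a
  have haZ : LinearIndependent ℤ aR :=
    ha.restrict_scalars (fun r s h => by simpa using h)
  have hli : LinearIndependent ℤ a := LinearIndependent.of_comp castₗ haZ
  set N : Submodule ℤ (Fin n → ℤ) := Submodule.span ℤ (Set.range a) with hNdef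
  set L : Submodule ℤ (EuclideanSpace ℝ (Fin n)) := Submodule.span ℤ (Set.range ⇑bR) with hLdef
  have hL : L = N.map castₗ := by
    rw [hLdef, hNdef, hbR, Submodule.map_span, ← Set.range_comp]
    rfl
  -- the parallelepiped is the fundamental domain
  have hfd : {x : EuclideanSpace ℝ (Fin n) |
        ∃ ρ : Fin n → ℝ, (∀ i, 0 ≤ ρ i ∧ ρ i < 1) ∧ x = ∑ j, ρ j • aR j}
      = ZSpan.fundamentalDomain bR := by
    ext x
    constructor
    · rintro ⟨ρ, hρ, rfl⟩ i
      rw [← hbR, Module.Basis.repr_sum_self]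
      exact ⟨(hρ i).1, (hρ i).2⟩
    · intro hx
      refine ⟨fun j => bR.repr x j, fun i => ⟨(hx i).1, (hx i).2⟩, ?_⟩
      rw [← hbR]
      exact (bR.sum_repr x).symm
  -- the map to the set
  set Sset := ({x : EuclideanSpace ℝ (Fin n) |
        ∃ ρ : Fin n → ℝ, (∀ i, 0 ≤ ρ i ∧ ρ i < 1) ∧ x = ∑ j, ρ j • aR j} ∩
      {x | ∀ i, ∃ z : ℤ, x i = (z : ℝ)}) with hSset
  have hmem : ∀ y : Fin n → ℤ, ZSpan.fract bR (castₗ y) ∈ Sset := by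
    intro y
    constructor
    · have h0 := ZSpan.fract_mem_fundamentalDomain bR (castₗ y)
      rw [← hfd] at h0
      exact h0
    · have hfl : (ZSpan.floor bR (castₗ y) : EuclideanSpace ℝ (Fin n)) ∈ L :=
        SetLike.coe_mem _
      rw [hL] at hfl
      obtain ⟨w, hw, hwe⟩ := hfl
      intro i
      refine ⟨y i - w i, ?_⟩
      have heq : ZSpan.fract bR (castₗ y) = castₗ (y - w) := by
        rw [ZSpan.fract_apply, ← hwe, ← map_sub]
      rw [heq]
      rfl
  let fl : (Fin n → ℤ) → ↥Sset := fun y => ⟨ZSpan.fract bR (castₗ y), hmem y⟩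
  have hsound : ∀ y y' : Fin n → ℤ,
      (QuotientAddGroup.leftRel N.toAddSubgroup).r y y' → fl y = fl y' := by
    intro y y' h
    have h' : -y + y' ∈ N := (Submodule.mem_toAddSubgroup _).mp (QuotientAddGroup.leftRel_apply.mp h)
    have hmem' : castₗ (-y + y') ∈ L := by
      rw [hL]; exact Submodule.mem_map_of_mem h'
    apply Subtype.ext
    show ZSpan.fract bR (castₗ y) = ZSpan.fract bR (castₗ y')
    have : castₗ y' = castₗ (-y + y') + castₗ y := by
      rw [← map_add]; congr 1; abel
    rw [this, ZSpan.fract_zSpan_add bR _ hmem']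
  let Φ : ((Fin n → ℤ) ⧸ N.toAddSubgroup) → ↥Sset :=
    fun q => Quotient.liftOn' q fl hsound
  have hΦinj : Function.Injective Φ := by
    intro q q'
    refine Quotient.inductionOn₂' q q' fun y y' h => ?_
    have h2 : ZSpan.fract bR (castₗ y) = ZSpan.fract bR (castₗ y') :=
      congrArg Subtype.val h
    have h3 : -castₗ y + castₗ y' ∈ L := (ZSpan.fract_eq_fract bR _ _).mp h2
    rw [hL] at h3
    obtain ⟨w, hw, hwe⟩ := h3
    have h4 : castₗ (-y + y') = castₗ w := by rw [map_add, map_neg, hwe]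
    have h5 : -y + y' ∈ N := by rwa [← hcast_inj h4] at hw
    exact Quotient.sound' (QuotientAddGroup.leftRel_apply.mpr
      ((Submodule.mem_toAddSubgroup _).mpr h5))
  have hΦsurj : Function.Surjective Φ := by
    rintro ⟨x, hx1, hx2⟩
    set y : Fin n → ℤ := fun i => (hx2 i).choose with hy
    have hxy : castₗ y = x := PiLp.ext fun i => ((hx2 i).choose_spec).symm
    refine ⟨Quotient.mk'' y, Subtype.ext ?_⟩
    show ZSpan.fract bR (castₗ y) = x
    rw [hxy]
    apply ZSpan.fract_eq_self.mpr
    rw [← hfd]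
    exact hx1
  calc Sset.ncard = Nat.card ↥Sset := (Nat.card_coe_set_eq _).symm
    _ = Nat.card ((Fin n → ℤ) ⧸ N.toAddSubgroup) :=
        (Nat.card_congr (Equiv.ofBijective Φ ⟨hΦinj, hΦsurj⟩)).symm
    _ = N.toAddSubgroup.index := (AddSubgroup.index_eq_card _).symm
    _ = ((Matrix.of fun i j => a j i).det).natAbs := aux_index_eq_natAbs_det n a hli
end

section
/- Let a_1, …, a_n ∈ ℤ^n be linearly independent, let C = {ρ_1 a_1 + ⋯ + ρ_n a_n : 0 ≤ ρ_i < 1}, and let t ∈ ℝ^n be any vector. Then #((t + C) ∩ ℤ^n) = #(C ∩ ℤ^n). -/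
section Aux

variable {n : ℕ}

private lemma eval_sum (c : Fin n → ℝ) (v : Fin n → EuclideanSpace ℝ (Fin n)) (i : Fin n) :
    (∑ j, c j • v j) i = ∑ j, c j * v j i := by
  induction (Finset.univ : Finset (Fin n)) using Finset.induction with
  | empty => rfl
  | insert _ _ h ih => rw [Finset.sum_insert h, Finset.sum_insert h, ← ih]; rfl

end Aux

/-- The number of integer points in any translate `t + C` of the half-open
parallelepiped `C` spanned by linearly independent integer vectors equals the
number of integer points in `C` itself. -/
theorem lattice_points_translated_parallelepiped (n : ℕ) (a : Fin n → Fin n → ℤ)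
    (ha : LinearIndependent ℝ (fun j => (WithLp.toLp 2 (fun i => (a j i : ℝ)) : EuclideanSpace ℝ (Fin n))))
    (t : EuclideanSpace ℝ (Fin n)) :
    (((fun x => t + x) '' {x : EuclideanSpace ℝ (Fin n) |
        ∃ ρ : Fin n → ℝ, (∀ i, 0 ≤ ρ i ∧ ρ i < 1) ∧
          x = ∑ j, ρ j • (WithLp.toLp 2 (fun i => (a j i : ℝ)) : EuclideanSpace ℝ (Fin n))}) ∩
      {x | ∀ i, ∃ z : ℤ, x i = (z : ℝ)}).ncard =
    ({x : EuclideanSpace ℝ (Fin n) |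
        ∃ ρ : Fin n → ℝ, (∀ i, 0 ≤ ρ i ∧ ρ i < 1) ∧
          x = ∑ j, ρ j • (WithLp.toLp 2 (fun i => (a j i : ℝ)) : EuclideanSpace ℝ (Fin n))} ∩
      {x | ∀ i, ∃ z : ℤ, x i = (z : ℝ)}).ncard := by
  classical
  rcases Nat.eq_zero_or_pos n with hn | hn
  · subst hn
    have ht : t = 0 := Subsingleton.elim t 0
    subst ht
    simp
  haveI : Nonempty (Fin n) := ⟨⟨0, hn⟩⟩
  set v : Fin n → EuclideanSpace ℝ (Fin n) := fun j => (WithLp.toLp 2 (fun i => (a j i : ℝ)) : EuclideanSpace ℝ (Fin n)) with hv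
  have hcard : Fintype.card (Fin n) = Module.finrank ℝ (EuclideanSpace ℝ (Fin n)) := by simp
  set b : Module.Basis (Fin n) ℝ (EuclideanSpace ℝ (Fin n)) :=
    basisOfLinearIndependentOfCardEqFinrank ha hcard with hbdef
  have hb : ⇑b = v := coe_basisOfLinearIndependentOfCardEqFinrank ha hcard
  set C : Set (EuclideanSpace ℝ (Fin n)) := {x | ∃ ρ : Fin n → ℝ, (∀ i, 0 ≤ ρ i ∧ ρ i < 1) ∧
      x = ∑ j, ρ j • v j} with hCdef
  set Z : Set (EuclideanSpace ℝ (Fin n)) := {x | ∀ i, ∃ z : ℤ, x i = (z : ℝ)} with hZdef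
  -- repr of a sum
  have hreprsum : ∀ (c : Fin n → ℝ), ⇑(b.repr (∑ j, c j • v j)) = c := by
    intro c
    conv_lhs => rw [← hb]
    exact b.repr_sum_self c
  have hsumrepr : ∀ x : EuclideanSpace ℝ (Fin n), (∑ j, b.repr x j • v j) = x := by
    intro x
    conv_lhs => rw [← hb]
    exact b.sum_repr x
  -- membership in C
  have hCmem : ∀ x, x ∈ C ↔ ∀ j, 0 ≤ b.repr x j ∧ b.repr x j < 1 := by
    intro x
    constructor
    · rintro ⟨ρ, hρ, rfl⟩ j
      rw [hreprsum]; exact hρ j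
    · intro h
      exact ⟨fun j => b.repr x j, h, (hsumrepr x).symm⟩
  -- the folding map
  set g : EuclideanSpace ℝ (Fin n) → EuclideanSpace ℝ (Fin n) :=
    fun y => ∑ j, Int.fract (b.repr y j) • v j with hgdef
  have hgrepr : ∀ y, ⇑(b.repr (g y)) = fun j => Int.fract (b.repr y j) := fun y => hreprsum _
  have hgC : ∀ y, g y ∈ C := by
    intro y
    exact ⟨fun j => Int.fract (b.repr y j),
      fun j => ⟨Int.fract_nonneg _, Int.fract_lt_one _⟩, rfl⟩
  have hgalt : ∀ y, g y = y - ∑ j, (⌊b.repr y j⌋ : ℝ) • v j := by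
    intro y
    conv_lhs => rw [hgdef]
    rw [eq_sub_iff_add_eq, ← Finset.sum_add_distrib]
    conv_rhs => rw [← hsumrepr y]
    refine Finset.sum_congr rfl fun j _ => ?_
    rw [← add_smul, Int.fract_add_floor]
  -- integer combinations of the a's are integer points
  have hintsum : ∀ (m : Fin n → ℤ), (∑ j, ((m j : ℝ)) • v j) ∈ Z := by
    intro m i
    refine ⟨∑ j, m j * a j i, ?_⟩
    rw [eval_sum]
    push_cast
    rfl
  have hZsub : ∀ x y, x ∈ Z → y ∈ Z → x - y ∈ Z := by
    rintro x y hx hy i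
    obtain ⟨z1, hz1⟩ := hx i
    obtain ⟨z2, hz2⟩ := hy i
    refine ⟨z1 - z2, ?_⟩
    have : (x - y) i = x i - y i := rfl
    rw [this, hz1, hz2]; push_cast; ring
  have hZadd : ∀ x y, x ∈ Z → y ∈ Z → x + y ∈ Z := by
    rintro x y hx hy i
    obtain ⟨z1, hz1⟩ := hx i
    obtain ⟨z2, hz2⟩ := hy i
    refine ⟨z1 + z2, ?_⟩
    have : (x + y) i = x i + y i := rfl
    rw [this, hz1, hz2]; push_cast; ring
  have hgZ : ∀ y, y ∈ Z → g y ∈ Z := by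
    intro y hy
    rw [hgalt]
    exact hZsub _ _ hy (hintsum _)
  -- main: image of A under g is B, and g injective on A
  have himg : g '' (((fun x => t + x) '' C) ∩ Z) = C ∩ Z := by
    apply Set.Subset.antisymm
    · rintro _ ⟨y, ⟨⟨x, hxC, rfl⟩, hyZ⟩, rfl⟩
      exact ⟨hgC _, hgZ _ hyZ⟩
    · rintro x ⟨hxC, hxZ⟩
      set m : Fin n → ℤ := fun j => ⌊b.repr (x - t) j⌋ with hm
      set y : EuclideanSpace ℝ (Fin n) := x - ∑ j, ((m j : ℝ)) • v j with hy
      have hyt : y = t + g (x - t) := by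
        rw [hy, hgalt (x - t)]
        simp only [hm]
        abel
      have hyrepr : ∀ j, b.repr y j = b.repr x j - m j := by
        intro j
        rw [hy, map_sub, Finsupp.sub_apply]
        congr 1
        have := congrFun (hreprsum (fun j => ((m j : ℝ)))) j
        exact this
      have hgyx : g y = x := by
        have hfr : ∀ j, Int.fract (b.repr y j) = b.repr x j := by
          intro j
          rw [hyrepr j, Int.fract_sub_intCast]
          exact Int.fract_eq_self.2 ((hCmem x).1 hxC j)
        calc g y = ∑ j, Int.fract (b.repr y j) • v j := rfl
          _ = ∑ j, b.repr x j • v j := by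
              exact Finset.sum_congr rfl fun j _ => by rw [hfr j]
          _ = x := hsumrepr x
      exact ⟨y, ⟨⟨g (x - t), hgC _, hyt.symm⟩, by
        rw [hy]; exact hZsub _ _ hxZ (hintsum m)⟩, hgyx⟩
  have hinj : Set.InjOn g (((fun x => t + x) '' C) ∩ Z) := by
    rintro y1 ⟨⟨x1, hx1, rfl⟩, _⟩ y2 ⟨⟨x2, hx2, rfl⟩, _⟩ heq
    have h1 := (hCmem x1).1 hx1
    have h2 := (hCmem x2).1 hx2
    have hfr : ∀ j, Int.fract (b.repr (t + x1) j) = Int.fract (b.repr (t + x2) j) := by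
      intro j
      have h := congrArg (fun w => b.repr w j) heq
      simpa only [hgrepr] using h
    have hdiff : ∀ j, b.repr (t + x1) j - b.repr (t + x2) j = b.repr x1 j - b.repr x2 j := by
      intro j
      rw [map_add, map_add, Finsupp.add_apply, Finsupp.add_apply]
      ring
    have hx12 : ∀ j, b.repr x1 j = b.repr x2 j := by
      intro j
      obtain ⟨z, hz⟩ := Int.fract_eq_fract.1 (hfr j)
      rw [hdiff j] at hz
      obtain ⟨hb1, hb1'⟩ := h1 j
      obtain ⟨hb2, hb2'⟩ := h2 j
      have hz1 : (z : ℝ) < 1 := by linarith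
      have hz2 : (-1 : ℝ) < z := by linarith
      have hz1' : z < 1 := by exact_mod_cast hz1
      have hz2' : -1 < z := by exact_mod_cast hz2
      have : z = 0 := by omega
      rw [this] at hz
      push_cast at hz
      linarith
    have hx : x1 = x2 := by
      rw [← hsumrepr x1, ← hsumrepr x2]
      exact Finset.sum_congr rfl fun j _ => by rw [hx12 j]
    rw [hx]
  calc (((fun x => t + x) '' C) ∩ Z).ncard
      = (g '' (((fun x => t + x) '' C) ∩ Z)).ncard := (Set.ncard_image_of_injOn hinj).symm
    _ = (C ∩ Z).ncard := by rw [himg]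
end

section
/- For n > 2 and m ∈ ℕ, m ≥ 1, with v = e_1 + ⋯ + e_n and T_m = conv{0, e_1, …, e_{n−1}, m·v}, the translate (1/2)v + T_m contains at least the m integer points v, 2v, …, m·v. -/
/-- The translate `(1/2)v + T_m` of the Reeve simplex
`T_m = conv{0, e₁, …, e_{n−1}, m·v}` (with `v = e₁ + ⋯ + e_n`, `n > 2`)
contains the `m` integer points `v, 2v, …, m·v`. -/
theorem translated_reeve_simplex_contains_points (n : ℕ) (hn : 2 < n) (m : ℕ) (hm : 1 ≤ m)
    (j : ℕ) (hj1 : 1 ≤ j) (hjm : j ≤ m) :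
    (j : ℝ) • (WithLp.toLp 2 (fun _ => (1 : ℝ)) : EuclideanSpace ℝ (Fin n)) ∈
      (fun x => (1 / 2 : ℝ) • (WithLp.toLp 2 (fun _ => (1 : ℝ)) : EuclideanSpace ℝ (Fin n)) + x) ''
        convexHull ℝ
          ({0, (m : ℝ) • (WithLp.toLp 2 (fun _ => (1 : ℝ)) : EuclideanSpace ℝ (Fin n))} ∪
            {x : EuclideanSpace ℝ (Fin n) |
              ∃ i : Fin n, (i : ℕ) < n - 1 ∧ x = EuclideanSpace.single i (1 : ℝ)}) := by
  set v : EuclideanSpace ℝ (Fin n) := WithLp.toLp 2 (fun _ => (1 : ℝ)) with hv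
  have hm0 : (0 : ℝ) < (m : ℝ) := by exact_mod_cast hm
  have hj1' : (1 : ℝ) ≤ (j : ℝ) := by exact_mod_cast hj1
  have hjm' : (j : ℝ) ≤ (m : ℝ) := by exact_mod_cast hjm
  refine ⟨((j : ℝ) - 1/2) • v, ?_, ?_⟩
  · have h0 : (0 : EuclideanSpace ℝ (Fin n)) ∈
        ({0, (m : ℝ) • v} ∪ {x : EuclideanSpace ℝ (Fin n) |
          ∃ i : Fin n, (i : ℕ) < n - 1 ∧ x = EuclideanSpace.single i (1 : ℝ)}) := by
      left; left; rfl
    have hmv : (m : ℝ) • v ∈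
        ({0, (m : ℝ) • v} ∪ {x : EuclideanSpace ℝ (Fin n) |
          ∃ i : Fin n, (i : ℕ) < n - 1 ∧ x = EuclideanSpace.single i (1 : ℝ)}) := by
      left; right; rfl
    have hseg : ((j : ℝ) - 1/2) • v ∈ segment ℝ (0 : EuclideanSpace ℝ (Fin n)) ((m : ℝ) • v) := by
      refine ⟨1 - ((j : ℝ) - 1/2) / m, ((j : ℝ) - 1/2) / m, ?_, ?_, by ring, ?_⟩
      · have : ((j : ℝ) - 1/2) / m ≤ 1 := by
          rw [div_le_one hm0]; linarith
        linarith
      · apply div_nonneg (by linarith) (le_of_lt hm0)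
      · rw [smul_zero, zero_add, smul_smul, div_mul_cancel₀ _ (ne_of_gt hm0)]
    exact segment_subset_convexHull h0 hmv hseg
  · show (1/2 : ℝ) • v + ((j : ℝ) - 1/2) • v = (j : ℝ) • v
    rw [← add_smul]; norm_num
end

section
/- Let Λ ⊂ ℝ^n be a full-rank lattice with polar lattice Λ*, let λ_1(Λ*) be the length of a shortest nonzero vector of Λ*, and let det Λ_{n−1} be the minimal determinant of an (n−1)-dimensional sublattice of Λ. Then det(Λ) · λ_1(Λ*) = det(Λ_{n−1}). -/
open RealInnerProductSpace Matrix

lemma sum_smul_apply {n k : ℕ} (v : Fin k → EuclideanSpace ℝ (Fin n)) (g : Fin k → ℝ)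
    (j : Fin n) : (∑ i, g i • v i) j = ∑ i, g i * v i j := by
  have h1 : ((∑ i, g i • v i : EuclideanSpace ℝ (Fin n))) j
      = ⟪EuclideanSpace.single j (1:ℝ), ∑ i, g i • v i⟫ := by
    rw [EuclideanSpace.inner_single_left]
    simp
  rw [h1, inner_sum]
  refine Finset.sum_congr rfl fun i _ => ?_
  rw [real_inner_smul_right, EuclideanSpace.inner_single_left]
  simp

lemma mem_orth_iff {k n : ℕ} (c : Fin k → EuclideanSpace ℝ (Fin n))
    (x : EuclideanSpace ℝ (Fin n)) :
    x ∈ (Submodule.span ℝ (Set.range c))ᗮ ↔ ∀ i, ⟪c i, x⟫ = 0 := by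
  rw [Submodule.mem_orthogonal]
  constructor
  · intro h i; exact h _ (Submodule.subset_span (Set.mem_range_self i))
  · intro h u hu
    induction hu using Submodule.span_induction with
    | mem u hu => obtain ⟨i, rfl⟩ := hu; exact h i
    | zero => exact inner_zero_left x
    | add u v _ _ hu hv => rw [inner_add_left, hu, hv]; ring
    | smul r u _ hu => rw [real_inner_smul_left, hu]; ring

lemma rows_indep {n : ℕ} (v : Fin n → EuclideanSpace ℝ (Fin n))
    (h : (Matrix.of fun i j => v i j).det ≠ 0) : LinearIndependent ℝ v := by
  rw [Fintype.linearIndependent_iff]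
  intro g hg
  by_contra hgi
  push_neg at hgi
  obtain ⟨i, hi⟩ := hgi
  refine h (Matrix.exists_vecMul_eq_zero_iff.mp ⟨g, fun h0 => hi (by rw [h0]; rfl), ?_⟩)
  funext j
  have h2 := congrArg (fun z : EuclideanSpace ℝ (Fin n) => z j) hg
  simp only [sum_smul_apply] at h2
  simpa [Matrix.vecMul, dotProduct] using h2

lemma basis_rowdet_ne_zero {n : ℕ} (b : Module.Basis (Fin n) ℝ (EuclideanSpace ℝ (Fin n))) :
    (Matrix.of fun i j => b i j).det ≠ 0 := by
  intro h
  obtain ⟨g, hg0, hg⟩ := Matrix.exists_vecMul_eq_zero_iff.mpr h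
  have hsum : (∑ i, g i • b i) = 0 := by
    ext j
    rw [sum_smul_apply]
    simpa [Matrix.vecMul, dotProduct] using congrFun hg j
  exact hg0 (funext (Fintype.linearIndependent_iff.mp b.linearIndependent g hsum))

lemma intcomb_det {n : ℕ} (b : Module.Basis (Fin n) ℝ (EuclideanSpace ℝ (Fin n)))
    (Z : Matrix (Fin n) (Fin n) ℤ) :
    (Matrix.of fun i j => (∑ k, (Z i k : ℝ) • b k) j).det
      = (Z.det : ℝ) * (Matrix.of fun i j => b i j).det := by
  have h : (Matrix.of fun i j => (∑ k, (Z i k : ℝ) • b k) j)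
      = (Z.map (Int.castRingHom ℝ)) * (Matrix.of fun i j => b i j) := by
    ext i j
    rw [Matrix.mul_apply, Matrix.of_apply, sum_smul_apply]
    simp
  rw [h, Matrix.det_mul]
  congr 1
  exact (RingHom.map_det (Int.castRingHom ℝ) Z).symm ▸ rfl


lemma gram_sq (k : ℕ) (v : Fin k → EuclideanSpace ℝ (Fin k)) :
    (Matrix.of fun i j => (⟪v i, v j⟫:ℝ)).det = ((Matrix.of fun i j => v i j).det)^2 := by
  have h : (Matrix.of fun i j => (⟪v i, v j⟫:ℝ)) =
      (Matrix.of fun i j => v i j) * (Matrix.of fun i j => v i j)ᵀ := by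
    ext i j
    simp [Matrix.mul_apply, PiLp.inner_apply, RCLike.inner_apply]
    exact Finset.sum_congr rfl fun _ _ => mul_comm _ _
  rw [h, Matrix.det_mul, Matrix.det_transpose, sq]

lemma rowdet_updateRow (m : ℕ) (c : Fin m → EuclideanSpace ℝ (Fin (m+1)))
    (x : EuclideanSpace ℝ (Fin (m+1))) :
    (Matrix.of fun i j => (Fin.snoc c x : Fin (m+1) → EuclideanSpace ℝ (Fin (m+1))) i j) =
      Matrix.updateRow
        (Matrix.of fun i j => (Fin.snoc c 0 : Fin (m+1) → EuclideanSpace ℝ (Fin (m+1))) i j)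
        (Fin.last m) ⇑x := by
  ext i j
  refine Fin.lastCases ?_ ?_ i <;>
    simp [Matrix.updateRow_self, Matrix.updateRow_ne, Fin.snoc_castSucc,
      (Fin.castSucc_lt_last _).ne]


noncomputable def crossMap (m : ℕ) (c : Fin m → EuclideanSpace ℝ (Fin (m+1))) :
    EuclideanSpace ℝ (Fin (m+1)) →ₗ[ℝ] ℝ where
  toFun x := (Matrix.of fun i j =>
      (Fin.snoc c x : Fin (m+1) → EuclideanSpace ℝ (Fin (m+1))) i j).det
  map_add' x y := by
    beta_reduce
    rw [rowdet_updateRow m c (x+y), rowdet_updateRow m c x, rowdet_updateRow m c y]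
    exact Matrix.det_updateRow_add _ _ _ _
  map_smul' r x := by
    simp only [RingHom.id_apply, smul_eq_mul]
    rw [rowdet_updateRow m c (r • x), rowdet_updateRow m c x]
    exact Matrix.det_updateRow_smul _ _ _ _

lemma crossMap_apply (m : ℕ) (c : Fin m → EuclideanSpace ℝ (Fin (m+1)))
    (x : EuclideanSpace ℝ (Fin (m+1))) :
    crossMap m c x = (Matrix.of fun i j =>
      (Fin.snoc c x : Fin (m+1) → EuclideanSpace ℝ (Fin (m+1))) i j).det := rfl

lemma cross_exists (m : ℕ) (c : Fin m → EuclideanSpace ℝ (Fin (m+1))) :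
    ∃ w : EuclideanSpace ℝ (Fin (m+1)),
      (∀ x : EuclideanSpace ℝ (Fin (m+1)), ⟪w, x⟫ = (Matrix.of fun i j =>
          (Fin.snoc c x : Fin (m+1) → EuclideanSpace ℝ (Fin (m+1))) i j).det) ∧
      ‖w‖^2 = (Matrix.of fun i j => (⟪c i, c j⟫:ℝ)).det ∧
      (LinearIndependent ℝ c → w ≠ 0) := by
  obtain ⟨w, hw⟩ : ∃ w : EuclideanSpace ℝ (Fin (m+1)),
      ∀ x : EuclideanSpace ℝ (Fin (m+1)), ⟪w, x⟫ = (Matrix.of fun i j =>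
        (Fin.snoc c x : Fin (m+1) → EuclideanSpace ℝ (Fin (m+1))) i j).det := by
    refine ⟨(InnerProductSpace.toDual ℝ (EuclideanSpace ℝ (Fin (m+1)))).symm
      (LinearMap.toContinuousLinearMap (crossMap m c)), fun x => ?_⟩
    rw [InnerProductSpace.toDual_symm_apply]
    simp [crossMap_apply]
  -- orthogonality to the c i
  have horth : ∀ i, ⟪c i, w⟫ = 0 := by
    intro i
    rw [real_inner_comm, hw]
    refine Matrix.det_zero_of_row_eq (i := Fin.castSucc i) (j := Fin.last m)
      (Fin.castSucc_lt_last i).ne ?_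
    funext j
    simp [Fin.snoc_castSucc, Fin.snoc_last]
  -- block determinant identity
  have hblock : ∀ x : EuclideanSpace ℝ (Fin (m+1)), (∀ i, ⟪c i, x⟫ = 0) →
      (Matrix.of fun i j => (⟪(Fin.snoc c x : Fin (m+1) → EuclideanSpace ℝ (Fin (m+1))) i,
        (Fin.snoc c x : Fin (m+1) → EuclideanSpace ℝ (Fin (m+1))) j⟫ : ℝ)).det
      = (Matrix.of fun i j => (⟪c i, c j⟫:ℝ)).det * ‖x‖^2 := by
    intro x hx
    rw [Matrix.det_succ_row _ (Fin.last m)]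
    rw [Finset.sum_eq_single (Fin.last m)]
    · have h1 : ((-1 : ℝ)) ^ ((Fin.last m : ℕ) + (Fin.last m : ℕ)) = 1 := by
        rw [← two_mul, pow_mul]
        norm_num
      rw [h1]
      have h2 : (Matrix.of fun i j => (⟪(Fin.snoc c x : Fin (m+1) → EuclideanSpace ℝ (Fin (m+1))) i,
          (Fin.snoc c x : Fin (m+1) → EuclideanSpace ℝ (Fin (m+1))) j⟫ : ℝ)).submatrix
          (Fin.last m).succAbove (Fin.last m).succAbove
          = Matrix.of fun i j => (⟪c i, c j⟫:ℝ) := by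
        ext i j
        simp [Fin.succAbove_last, Fin.snoc_castSucc]
      rw [h2]
      have h3 : (⟪(Fin.snoc c x : Fin (m+1) → EuclideanSpace ℝ (Fin (m+1))) (Fin.last m),
          (Fin.snoc c x : Fin (m+1) → EuclideanSpace ℝ (Fin (m+1))) (Fin.last m)⟫ : ℝ) = ‖x‖^2 := by
        simp only [Fin.snoc_last]
        exact real_inner_self_eq_norm_sq x
      simp only [Matrix.of_apply] at h3 ⊢
      rw [h3]
      ring
    · intro j _ hj
      obtain ⟨j', rfl⟩ : ∃ j', j = Fin.castSucc j' := ⟨j.castPred hj, by simp⟩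
      have : (⟪(Fin.snoc c x : Fin (m+1) → EuclideanSpace ℝ (Fin (m+1))) (Fin.last m),
          (Fin.snoc c x : Fin (m+1) → EuclideanSpace ℝ (Fin (m+1))) (Fin.castSucc j')⟫ : ℝ) = 0 := by
        rw [Fin.snoc_last, Fin.snoc_castSucc, real_inner_comm]
        exact hx j'
      simp only [Matrix.of_apply] at this ⊢
      rw [this]
      ring
    · simp
  -- squared pairing identity
  have hsq : ∀ x : EuclideanSpace ℝ (Fin (m+1)), (∀ i, ⟪c i, x⟫ = 0) →
      (⟪w, x⟫:ℝ)^2 = (Matrix.of fun i j => (⟪c i, c j⟫:ℝ)).det * ‖x‖^2 := by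
    intro x hx
    rw [hw, ← gram_sq (m+1) (Fin.snoc c x), hblock x hx]
  -- existence of a nonzero orthogonal vector
  have hexorth : ∃ x : EuclideanSpace ℝ (Fin (m+1)), x ≠ 0 ∧ ∀ i, ⟪c i, x⟫ = 0 := by
    have hne : (Submodule.span ℝ (Set.range c))ᗮ ≠ ⊥ := by
      intro h
      have htop := Submodule.orthogonal_eq_bot_iff.mp h
      have h1 : Module.finrank ℝ (Submodule.span ℝ (Set.range c)) ≤ m := by
        calc Module.finrank ℝ (Submodule.span ℝ (Set.range c)) ≤ Fintype.card (Fin m) :=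
              finrank_range_le_card c
          _ = m := Fintype.card_fin m
      rw [htop] at h1
      simp [finrank_top, finrank_euclideanSpace_fin] at h1
    obtain ⟨x, hx, hx0⟩ := Submodule.exists_mem_ne_zero_of_ne_bot hne
    exact ⟨x, hx0, fun i => (Submodule.mem_orthogonal _ _).mp hx _
      (Submodule.subset_span (Set.mem_range_self i))⟩
  -- norm identity
  have hnorm : ‖w‖^2 = (Matrix.of fun i j => (⟪c i, c j⟫:ℝ)).det := by
    by_cases hw0 : w = 0
    · obtain ⟨x, hx0, hxorth⟩ := hexorth
      have := hsq x hxorth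
      rw [hw0] at this
      simp only [inner_zero_left] at this
      norm_num at this
      have hxn : ‖x‖^2 ≠ 0 := pow_ne_zero _ (norm_ne_zero_iff.mpr hx0)
      have hd : (Matrix.of fun i j => (⟪c i, c j⟫:ℝ)).det = 0 := by
        rcases this with h | h
        · exact h
        · exact absurd h hx0
      rw [hw0, hd]
      simp
    · have := hsq w horth
      rw [real_inner_self_eq_norm_sq] at this
      have hwn : ‖w‖^2 ≠ 0 := pow_ne_zero _ (norm_ne_zero_iff.mpr hw0)
      refine mul_right_cancel₀ hwn ?_
      rw [← this]
      ring
  refine ⟨w, hw, hnorm, ?_⟩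
  intro hli hw0
  have hdet0 : (Matrix.of fun i j => (⟪c i, c j⟫:ℝ)).det = 0 := by
    rw [← hnorm, hw0]; simp
  obtain ⟨u, hu0, hmul⟩ := (Matrix.exists_mulVec_eq_zero_iff).mpr hdet0
  have hzero : (∑ i, u i • c i) = 0 := by
    rw [← inner_self_eq_zero (𝕜 := ℝ)]
    have : (⟪∑ i, u i • c i, ∑ j, u j • c j⟫:ℝ) = ∑ i, u i * ((Matrix.of fun i j =>
        (⟪c i, c j⟫:ℝ)).mulVec u i) := by
      rw [sum_inner]
      refine Finset.sum_congr rfl fun i _ => ?_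
      rw [real_inner_smul_left, inner_sum]
      simp only [Matrix.mulVec, dotProduct, Matrix.of_apply]
      congr 1
      refine Finset.sum_congr rfl fun j _ => ?_
      rw [real_inner_smul_right]
      ring
    rw [this, hmul]
    simp
  have := Fintype.linearIndependent_iff.mp hli u hzero
  exact hu0 (funext this)


/-- For a full-rank lattice `Λ ⊆ ℝⁿ` with polar lattice `Λ*`, the determinant of
`Λ` times the length `λ₁(Λ*)` of a shortest nonzero vector of `Λ*` equals the
minimal determinant of an `(n−1)`-dimensional sublattice of `Λ`. -/
theorem det_times_lambda1_polar_eq_min_sublattice_det (n : ℕ) (hn : 1 ≤ n)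
    (b : Module.Basis (Fin n) ℝ (EuclideanSpace ℝ (Fin n)))
    (Λ : Set (EuclideanSpace ℝ (Fin n)))
    (hΛ : Λ = (Submodule.span ℤ (Set.range ⇑b) : Set (EuclideanSpace ℝ (Fin n))))
    (detΛ : ℝ) (hdet : detΛ = |(Matrix.of fun i j => b i j).det|)
    (polarΛ : Set (EuclideanSpace ℝ (Fin n)))
    (hpolar : polarΛ = {y | ∀ x ∈ Λ, ∃ z : ℤ, ⟪y, x⟫ = (z : ℝ)})
    (lambda1 : ℝ) (hlambda1 : lambda1 = sInf {r | ∃ y ∈ polarΛ, y ≠ 0 ∧ ‖y‖ = r})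
    (detSub : ℝ) (hdetSub : detSub = sInf {d | ∃ c : Fin (n - 1) → EuclideanSpace ℝ (Fin n),
      (∀ j, c j ∈ Λ) ∧ LinearIndependent ℝ c ∧
        d = Real.sqrt ((Matrix.of fun i j => ⟪c i, c j⟫).det)}) :
    detΛ * lambda1 = detSub := by
  obtain ⟨m, rfl⟩ : ∃ m, n = m + 1 := ⟨n - 1, by omega⟩
  subst hΛ hpolar hdet hlambda1 hdetSub
  set E := EuclideanSpace ℝ (Fin (m+1)) with hE
  set B : Matrix (Fin (m+1)) (Fin (m+1)) ℝ := Matrix.of fun i j => b i j with hB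
  set Λ : Set E := (Submodule.span ℤ (Set.range ⇑b) : Set E) with hΛ
  set S1 : Set ℝ := {r | ∃ y ∈ {y : E | ∀ x ∈ Λ, ∃ z : ℤ, ⟪y, x⟫ = (z : ℝ)}, y ≠ 0 ∧ ‖y‖ = r}
    with hS1
  set S2 : Set ℝ := {d | ∃ c : Fin (m + 1 - 1) → E,
      (∀ j, c j ∈ Λ) ∧ LinearIndependent ℝ c ∧
        d = Real.sqrt ((Matrix.of fun i j => ⟪c i, c j⟫).det)} with hS2
  show |B.det| * sInf S1 = sInf S2
  have hBne : B.det ≠ 0 := basis_rowdet_ne_zero b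
  have hdetpos : (0:ℝ) < |B.det| := abs_pos.mpr hBne
  have hcoord : ∀ x ∈ Λ, ∃ z : Fin (m+1) → ℤ, x = ∑ j, (z j : ℝ) • b j := by
    intro x hx
    obtain ⟨z, hz⟩ := (Submodule.mem_span_range_iff_exists_fun ℤ).mp hx
    refine ⟨z, ?_⟩
    rw [← hz]
    exact Finset.sum_congr rfl fun i _ => (Int.cast_smul_eq_zsmul ℝ (z i) (b i)).symm
  have hmem : ∀ z : Fin (m+1) → ℤ, (∑ j, (z j : ℝ) • b j) ∈ Λ := by
    intro z
    refine Submodule.sum_mem _ fun j _ => ?_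
    rw [Int.cast_smul_eq_zsmul]
    exact Submodule.smul_mem _ _ (Submodule.subset_span ⟨j, rfl⟩)
  have hS1bdd : BddBelow S1 := ⟨0, fun r hr => by
    obtain ⟨y, _, _, rfl⟩ := hr; exact norm_nonneg y⟩
  have hS2bdd : BddBelow S2 := ⟨0, fun d hd => by
    obtain ⟨c, _, _, rfl⟩ := hd; exact Real.sqrt_nonneg _⟩
  have hS2ne : S2.Nonempty := by
    refine ⟨_, (b ∘ Fin.castSucc : Fin (m+1-1) → E), fun j => ?_, ?_, rfl⟩
    · exact Submodule.subset_span ⟨_, rfl⟩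
    · exact b.linearIndependent.comp _ (Fin.castSucc_injective m)
  have hS1ne : S1.Nonempty := by
    set w0 : E := (InnerProductSpace.toDual ℝ E).symm
      (LinearMap.toContinuousLinearMap (b.coord 0)) with hw0
    have hw0app : ∀ x : E, ⟪w0, x⟫ = b.coord 0 x := by
      intro x
      rw [hw0, InnerProductSpace.toDual_symm_apply]
      simp
    refine ⟨‖w0‖, w0, fun x hx => ?_, fun h0 => ?_, rfl⟩
    · obtain ⟨z, rfl⟩ := hcoord x hx
      refine ⟨z 0, ?_⟩
      rw [hw0app]
      simp only [map_sum, _root_.map_smul]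
      rw [Finset.sum_eq_single 0]
      · simp
      · intro j _ hj
        simp [Module.Basis.coord_apply, Finsupp.single_apply, hj]
      · simp
    · have h1 := hw0app (b 0)
      rw [h0] at h1
      simp at h1
  -- direction 1
  have hineq1 : |B.det| * sInf S1 ≤ sInf S2 := by
    refine le_csInf hS2ne ?_
    rintro d ⟨c, hcΛ, hcind, rfl⟩
    have c' : Fin m → E := c
    obtain ⟨w, hw1, hw2, hw3⟩ := cross_exists m c
    have hwne : w ≠ 0 := hw3 hcind
    set y : E := (B.det)⁻¹ • w with hy
    have hy_polar : ∀ x ∈ Λ, ∃ z : ℤ, ⟪y, x⟫ = (z : ℝ) := by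
      intro x hx
      obtain ⟨zx, rfl⟩ := hcoord x hx
      choose zc hzc using fun i => hcoord (c i) (hcΛ i)
      refine ⟨(Matrix.of (Fin.snoc zc zx : Fin (m+1) → Fin (m+1) → ℤ)).det, ?_⟩
      rw [hy, real_inner_smul_left, hw1]
      have hrows : (Matrix.of fun i j => (Fin.snoc c (∑ k, (zx k:ℝ) • b k) :
          Fin (m+1) → E) i j)
          = Matrix.of fun i j =>
            (∑ k, (((Matrix.of (Fin.snoc zc zx : Fin (m+1) → Fin (m+1) → ℤ) i k : ℤ) : ℝ)) • b k) j := by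
        ext i j
        refine Fin.lastCases ?_ ?_ i
        · simp [Fin.snoc_last]
          exact sum_smul_apply (n := m+1) (fun k => b k) (fun k => (zx k : ℝ)) j
        · intro i
          simp only [Matrix.of_apply, Fin.snoc_castSucc]
          exact congrArg (fun v : E => v j) (hzc i)
      rw [hrows, intcomb_det b]
      field_simp
      rw [hB]; ring
    have hyne : y ≠ 0 := smul_ne_zero (inv_ne_zero hBne) hwne
    have h1 : sInf S1 ≤ ‖y‖ := csInf_le hS1bdd ⟨y, hy_polar, hyne, rfl⟩
    have hnormy : |B.det| * ‖y‖ = ‖w‖ := by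
      rw [hy, norm_smul]
      rw [norm_inv, Real.norm_eq_abs]
      field_simp
    have hsqrt : ‖w‖ = Real.sqrt ((Matrix.of fun i j => (⟪c i, c j⟫:ℝ)).det) := by
      conv_lhs => rw [← Real.sqrt_sq (norm_nonneg w)]
      exact congrArg Real.sqrt hw2
    calc |B.det| * sInf S1 ≤ |B.det| * ‖y‖ :=
          mul_le_mul_of_nonneg_left h1 (abs_nonneg _)
      _ = ‖w‖ := hnormy
      _ = _ := hsqrt
  -- direction 2
  have key : ∀ y : E, (∀ x ∈ Λ, ∃ z : ℤ, ⟪y, x⟫ = (z:ℝ)) → y ≠ 0 →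
      sInf S2 ≤ |B.det| * ‖y‖ := by
    intro y hy hyne
    choose a ha using fun i => hy (b i) (Submodule.subset_span ⟨i, rfl⟩)
    have hane : ∃ i, a i ≠ 0 := by
      by_contra h
      push_neg at h
      apply hyne
      have hyorth : y ∈ (Submodule.span ℝ (Set.range ⇑b))ᗮ := by
        rw [mem_orth_iff]
        intro i
        rw [real_inner_comm, ha i, h i]
        simp
      rw [b.span_eq] at hyorth
      simpa [Submodule.top_orthogonal_eq_bot] using hyorth
    let f : (Fin (m+1) → ℤ) →ₗ[ℤ] ℤ := {
      toFun := fun z => ∑ i, z i * a i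
      map_add' := by intro u v; simp [add_mul, Finset.sum_add_distrib]
      map_smul' := by intro r u; simp [Finset.mul_sum, mul_assoc] }
    have hfe : ∀ j, f (Pi.single j 1) = a j := by
      intro j
      have hrfl : f (Pi.single j 1) = ∑ i, (Pi.single j (1:ℤ) : Fin (m+1) → ℤ) i * a i := rfl
      rw [hrfl, Finset.sum_eq_single j]
      · simp
      · intro i _ hij
        simp [Pi.single_apply, hij]
      · simp
    have hip : ∀ z : Fin (m+1) → ℤ, ⟪y, ∑ k, ((z k : ℤ) : ℝ) • b k⟫ = ((f z : ℤ) : ℝ) := by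
      intro z
      rw [inner_sum]
      have hrfl : ((f z : ℤ) : ℝ) = ((∑ i, z i * a i : ℤ) : ℝ) := rfl
      rw [hrfl]
      push_cast
      refine Finset.sum_congr rfl fun k _ => ?_
      rw [real_inner_smul_right, ha k]
    obtain ⟨r, snf⟩ := Submodule.smithNormalForm (Pi.basisFun ℤ (Fin (m+1))) (LinearMap.ker f)
    have hsat : ∀ i, f (snf.bM (snf.f i)) = 0 := by
      intro i
      have h0 : f ((snf.bN i : Fin (m+1) → ℤ)) = 0 := (LinearMap.mem_ker).mp (snf.bN i).2
      rw [snf.snf i] at h0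
      simp only [_root_.map_smul, smul_eq_mul] at h0
      have hai : snf.a i ≠ 0 := by
        intro hz
        have h1 := snf.snf i
        rw [hz, zero_smul] at h1
        exact (snf.bN.ne_zero i) (Submodule.coe_eq_zero.mp h1)
      exact (mul_eq_zero.mp h0).resolve_left hai
    have hnotall : ¬ (∀ j, f (snf.bM j) = 0) := by
      intro hker
      obtain ⟨i0, hi0⟩ := hane
      have h1 : (⊤ : Submodule ℤ (Fin (m+1) → ℤ)) ≤ LinearMap.ker f := by
        rw [← snf.bM.span_eq]
        refine Submodule.span_le.mpr ?_
        rintro _ ⟨j, rfl⟩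
        exact LinearMap.mem_ker.mpr (hker j)
      have h2 : f (Pi.single i0 1) = 0 := LinearMap.mem_ker.mp (h1 trivial)
      rw [hfe] at h2
      exact hi0 h2
    -- r = m
    have hrle : r ≤ m := by
      have hle : r ≤ m + 1 := by simpa using Fintype.card_le_of_embedding snf.f
      rcases Nat.lt_or_ge r (m+1) with hlt | hge
      · omega
      · exfalso
        have hreq : r = m + 1 := by omega
        subst hreq
        have hsurj : Function.Surjective snf.f := by
          have hbij := (Fintype.bijective_iff_injective_and_card snf.f).mpr
            ⟨snf.f.injective, by simp⟩
          exact hbij.surjective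
        refine hnotall fun j => ?_
        obtain ⟨i, rfl⟩ := hsurj j
        exact hsat i
    have hrge : m ≤ r := by
      obtain ⟨i0, hi0⟩ := hane
      let v : {i : Fin (m+1) // i ≠ i0} → (Fin (m+1) → ℤ) :=
        fun i => a i0 • Pi.single (i : Fin (m+1)) 1 - a i • Pi.single i0 1
      have hvker : ∀ i, v i ∈ LinearMap.ker f := by
        intro i
        rw [LinearMap.mem_ker]
        simp only [v, map_sub, _root_.map_smul, hfe, smul_eq_mul]
        ring
      have hvind : LinearIndependent ℤ (fun i => (⟨v i, hvker i⟩ : LinearMap.ker f)) := by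
        rw [Fintype.linearIndependent_iff]
        intro g hg i
        have hg' : (∑ j, g j • v j) = (0 : Fin (m+1) → ℤ) := by
          have := congrArg (Submodule.subtype (LinearMap.ker f)) hg
          simpa [map_sum, _root_.map_smul] using this
        have h2 := congrFun hg' (i : Fin (m+1))
        simp only [v, Finset.sum_apply, Pi.smul_apply, Pi.sub_apply, Pi.single_apply,
          smul_eq_mul, Pi.zero_apply] at h2
        rw [Finset.sum_eq_single i] at h2
        · rw [if_pos rfl, if_neg i.2] at h2
          simp only [mul_one, mul_zero, sub_zero] at h2
          rcases mul_eq_zero.mp h2 with h | h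
          · exact h
          · exact absurd h hi0
        · intro j _ hji
          rw [if_neg (fun hh : (i : Fin (m+1)) = (j : Fin (m+1)) =>
            hji (Subtype.ext hh).symm), if_neg i.2]
          ring
        · simp
      have hcard := hvind.fintype_card_le_finrank
      rw [Module.finrank_eq_card_basis snf.bN] at hcard
      simpa [Fintype.card_subtype_compl] using hcard
    have hr : m = r := le_antisymm hrge hrle
    subst hr
    -- the missing index
    obtain ⟨j0, hj0⟩ : ∃ j0, j0 ∉ Set.range snf.f := by
      by_contra h
      push_neg at h
      have hsurj : Function.Surjective snf.f := fun j => h j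
      have h2 := Fintype.card_le_of_surjective snf.f hsurj
      simp only [Fintype.card_fin] at h2
      omega
    let G : Fin (m+1) → Fin (m+1) := Fin.snoc (fun i : Fin m => snf.f i) j0
    have hGcast : ∀ i : Fin m, G (Fin.castSucc i) = snf.f i := fun i => Fin.snoc_castSucc ..
    have hGlast : G (Fin.last m) = j0 := Fin.snoc_last ..
    have hGinj : Function.Injective G := by
      intro s t hst
      induction s using Fin.lastCases with
      | last =>
        induction t using Fin.lastCases with
        | last => rfl
        | cast t' =>
          rw [hGlast, hGcast] at hst
          exact absurd ⟨t', hst.symm⟩ hj0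
      | cast s' =>
        induction t using Fin.lastCases with
        | last =>
          rw [hGlast, hGcast] at hst
          exact absurd ⟨s', hst⟩ hj0
        | cast t' =>
          rw [hGcast, hGcast] at hst
          exact congrArg Fin.castSucc (snf.f.injective hst)
    let σ : Equiv.Perm (Fin (m+1)) := Equiv.ofBijective G
      ((Finite.injective_iff_bijective).mp hGinj)
    have hσ : ∀ x, σ x = G x := fun x => rfl
    let u : Fin (m+1) → E := fun j => ∑ k, ((snf.bM j k : ℤ) : ℝ) • b k
    let Z : Matrix (Fin (m+1)) (Fin (m+1)) ℤ := Matrix.of fun j k => snf.bM j k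
    have hu_det : (Matrix.of fun i j => u i j).det = (Z.det : ℝ) * B.det := intcomb_det b Z
    have hZunit : IsUnit Z.det := by
      have hZ : Zᵀ = (Pi.basisFun ℤ (Fin (m+1))).toMatrix snf.bM := by
        ext i j
        simp [Z, Module.Basis.toMatrix_apply]
      rw [← Matrix.det_transpose, hZ, ← Module.Basis.det_apply]
      exact (Pi.basisFun ℤ (Fin (m+1))).isUnit_det snf.bM
    have hZabs : |(Z.det : ℝ)| = 1 := by
      rcases Int.isUnit_iff.mp hZunit with h | h <;> rw [h] <;> norm_num
    have hu_ind : LinearIndependent ℝ u := by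
      refine rows_indep u ?_
      rw [hu_det]
      refine mul_ne_zero (fun h0 => ?_) hBne
      rw [h0] at hZabs
      norm_num at hZabs
    let c : Fin (m + 1 - 1) → E := fun i => u (snf.f i)
    have hcΛ : ∀ j, c j ∈ Λ := fun j => hmem _
    have hcind : LinearIndependent ℝ c :=
      hu_ind.comp (fun i : Fin (m+1-1) => snf.f i) (fun s t hst => snf.f.injective hst)
    have hcy : ∀ i, ⟪c i, y⟫ = 0 := by
      intro i
      rw [real_inner_comm]
      show ⟪y, ∑ k, ((snf.bM (snf.f i) k : ℤ) : ℝ) • b k⟫ = 0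
      rw [hip]
      rw [hsat i]
      simp
    obtain ⟨w, hw1, hw2, hw3⟩ := cross_exists m c
    have hwne : w ≠ 0 := hw3 hcind
    have hcw : ∀ i, ⟪c i, w⟫ = 0 := by
      intro i
      rw [real_inner_comm, hw1]
      refine Matrix.det_zero_of_row_eq (i := Fin.castSucc i) (j := Fin.last m)
        (Fin.castSucc_lt_last i).ne ?_
      funext j
      simp [Fin.snoc_castSucc, Fin.snoc_last]
    -- w and y are parallel
    have hHrank : Module.finrank ℝ (Submodule.span ℝ (Set.range c)) = m := by
      rw [finrank_span_eq_card hcind]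
      simp
    have horthrank : Module.finrank ℝ (Submodule.span ℝ (Set.range c))ᗮ = 1 := by
      have h1 := Submodule.finrank_add_finrank_orthogonal
        (K := Submodule.span ℝ (Set.range c))
      rw [hHrank, finrank_euclideanSpace_fin] at h1
      omega
    have hwH : w ∈ (Submodule.span ℝ (Set.range c))ᗮ := (mem_orth_iff c w).mpr hcw
    have hyH : y ∈ (Submodule.span ℝ (Set.range c))ᗮ := (mem_orth_iff c y).mpr hcy
    obtain ⟨t, ht⟩ : ∃ t : ℝ, w = t • y := by
      have hy0 : (⟨y, hyH⟩ : (Submodule.span ℝ (Set.range c))ᗮ) ≠ 0 := by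
        intro h0
        exact hyne (by simpa using congrArg Subtype.val h0)
      have h1 := (finrank_eq_one_iff_of_nonzero (⟨y, hyH⟩ :
        (Submodule.span ℝ (Set.range c))ᗮ) hy0).mp horthrank
      have h2 : (⟨w, hwH⟩ : (Submodule.span ℝ (Set.range c))ᗮ) ∈
          Submodule.span ℝ {(⟨y, hyH⟩ : (Submodule.span ℝ (Set.range c))ᗮ)} := by
        rw [h1]; trivial
      obtain ⟨t, ht⟩ := Submodule.mem_span_singleton.mp h2
      exact ⟨t, by simpa using (congrArg Subtype.val ht).symm⟩
    -- the extra vector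
    have hd0 : ∃ d0 : ℤ, ⟪y, u j0⟫ = (d0 : ℝ) ∧ d0 ≠ 0 := by
      refine ⟨f (snf.bM j0), hip _, fun h0 => ?_⟩
      refine hnotall fun j => ?_
      obtain ⟨i, hi⟩ := σ.surjective j
      induction i using Fin.lastCases with
      | last =>
        rw [hσ, hGlast] at hi
        rw [← hi]
        exact h0
      | cast i' =>
        rw [hσ, hGcast] at hi
        rw [← hi]
        exact hsat i'
    obtain ⟨d0, hd0inner, hd0ne⟩ := hd0
    -- determinant of the full rows
    have hperm : (Matrix.of fun i j => (Fin.snoc c (u j0) : Fin (m+1) → E) i j)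
        = (Matrix.of fun i j => u i j).submatrix σ id := by
      ext i j
      simp only [Matrix.submatrix_apply, id_eq, Matrix.of_apply, hσ]
      refine Fin.lastCases ?_ ?_ i
      · rw [Fin.snoc_last, hGlast]
      · intro i'
        rw [Fin.snoc_castSucc, hGcast]
    have habs1 : |(⟪w, u j0⟫:ℝ)| = |B.det| := by
      rw [hw1, hperm, Matrix.det_permute, hu_det]
      rw [abs_mul, abs_mul]
      have hsgn : |((Equiv.Perm.sign σ : ℤ) : ℝ)| = 1 := by
        rcases Int.units_eq_one_or (Equiv.Perm.sign σ) with h | h <;> rw [h] <;> norm_num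
      rw [hsgn, hZabs]
      ring
    have htval : ⟪w, u j0⟫ = t * (d0:ℝ) := by
      rw [ht, real_inner_smul_left, hd0inner]
    have htd : |t| * |(d0:ℝ)| = |B.det| := by
      rw [← abs_mul, ← htval, habs1]
    have hd0ge : (1:ℝ) ≤ |(d0:ℝ)| := by
      have := Int.one_le_abs hd0ne
      exact_mod_cast this
    have htle : |t| ≤ |B.det| := by nlinarith [abs_nonneg t]
    have hnw : ‖w‖ = |t| * ‖y‖ := by rw [ht, norm_smul, Real.norm_eq_abs]
    have hsqrt : Real.sqrt ((Matrix.of fun i j => (⟪c i, c j⟫:ℝ)).det) = ‖w‖ := by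
      conv_rhs => rw [← Real.sqrt_sq (norm_nonneg w)]
      exact (congrArg Real.sqrt hw2).symm
    have hmemS2 : Real.sqrt ((Matrix.of fun i j => (⟪c i, c j⟫:ℝ)).det) ∈ S2 :=
      ⟨c, hcΛ, hcind, rfl⟩
    have h5 : sInf S2 ≤ Real.sqrt ((Matrix.of fun i j => (⟪c i, c j⟫:ℝ)).det) :=
      csInf_le hS2bdd hmemS2
    rw [hsqrt, hnw] at h5
    have h6 : |t| * ‖y‖ ≤ |B.det| * ‖y‖ :=
      mul_le_mul_of_nonneg_right htle (norm_nonneg y)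
    linarith
  have hineq2 : sInf S2 ≤ |B.det| * sInf S1 := by
    have hlb : ∀ r ∈ S1, sInf S2 / |B.det| ≤ r := by
      rintro r ⟨y, hy, hyne, rfl⟩
      rw [div_le_iff₀ hdetpos]
      calc sInf S2 ≤ |B.det| * ‖y‖ := key y hy hyne
        _ = ‖y‖ * |B.det| := by ring
    have h2 : sInf S2 / |B.det| ≤ sInf S1 := le_csInf hS1ne hlb
    rw [div_le_iff₀ hdetpos] at h2
    linarith [h2, mul_comm (sInf S1) |B.det|]
  linarith
end
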